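/- Suppose ≿ is a complete transitive relation on {0,1}^ℕ satisfying Weak Upper Asymptotic Pareto and Anonymity. Then the map assigning to each r ∈ (0,1) the pair of streams (x(r), z(r)) constructed from a fixed enumeration of the rationals yields, for any r < s in (0,1), the strict chain x(r) ≺ z(r) ≺' x(s) ≺ z(s) (where ≺' may pass through an intermediate anonymity-equivalent stream). Consequently, if W represents ≿, the open intervals (W(x(r)), W(z(r))), r ∈ (0,1), are pairwise disjoint and nonempty. -/

import Mathlib

open Filter Topology

noncomputable def upperDensity (S : Set ℕ) : ℝ :=
  Filter.limsup (fun n : ℕ => (Nat.card (↥(S ∩ Set.Icc 1 n)) : ℝ) / (n : ℝ)) Filter.atTop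

def blk (i : ℕ) : ℕ := Nat.findGreatest (fun n => n.factorial ≤ i) i

lemma blk_fact_le {i : ℕ} (hi : 1 ≤ i) : (blk i).factorial ≤ i :=
  Nat.findGreatest_spec (P := fun n => n.factorial ≤ i) (m := 1) hi (by simpa using hi)

lemma lt_fact_blk_succ (i : ℕ) : i < (blk i + 1).factorial := by
  by_contra h
  push_neg at h
  have h1 : blk i + 1 ≤ i := le_trans (Nat.self_le_factorial _) h
  exact Nat.findGreatest_is_greatest (Nat.lt_succ_self _) h1 h

lemma blk_eq {l i : ℕ} (hl : 1 ≤ l) (h1 : l.factorial ≤ i) (h2 : i < (l + 1).factorial) :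
    blk i = l := by
  have hge : l ≤ blk i := Nat.le_findGreatest (le_trans (Nat.self_le_factorial l) h1) h1
  have hle : blk i ≤ l := by
    by_contra h
    push_neg at h
    have h3 : (l + 1).factorial ≤ (blk i).factorial := Nat.factorial_le h
    have hi1 : 1 ≤ i := le_trans hl (le_trans (Nat.self_le_factorial l) h1)
    have := le_trans h3 (blk_fact_le hi1)
    omega
  omega

lemma blk_fact {l : ℕ} (hl : 1 ≤ l) : blk l.factorial = l :=
  blk_eq hl le_rfl ((Nat.factorial_lt hl).mpr (Nat.lt_succ_self l))

lemma blk_mem_bound {i m : ℕ} (h : blk i ≤ m) : i < (m + 1).factorial :=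
  lt_of_lt_of_le (lt_fact_blk_succ i) (Nat.factorial_le (by omega))

lemma upperDensity_eq_one (S : Set ℕ)
    (h : ∀ N : ℕ, ∃ l, N ≤ l ∧ 1 ≤ l ∧ Set.Ico l.factorial (l + 1).factorial ⊆ S) :
    upperDensity S = 1 := by
  set f : ℕ → ℝ := fun n => (Nat.card ↥(S ∩ Set.Icc 1 n) : ℝ) / n with hf
  have hcard : ∀ n, (Nat.card ↥(S ∩ Set.Icc 1 n)) ≤ n := by
    intro n
    rw [Nat.card_coe_set_eq]
    calc (S ∩ Set.Icc 1 n).ncard ≤ (Set.Icc 1 n).ncard :=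
          Set.ncard_le_ncard Set.inter_subset_right (Set.finite_Icc 1 n)
      _ = n := by rw [Set.ncard_eq_toFinset_card']; simp
  have hle : ∀ n, f n ≤ 1 := by
    intro n
    rcases Nat.eq_zero_or_pos n with h0 | h0
    · simp [hf, h0]
    · rw [hf]
      have : (0:ℝ) < n := by exact_mod_cast h0
      rw [div_le_one this]
      exact_mod_cast hcard n
  have hge0 : ∀ n, 0 ≤ f n := fun n => div_nonneg (Nat.cast_nonneg _) (Nat.cast_nonneg _)
  have hbddle : IsBoundedUnder (· ≤ ·) atTop f := isBoundedUnder_of ⟨1, hle⟩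
  have hbddge : IsBoundedUnder (· ≥ ·) atTop f := isBoundedUnder_of ⟨0, hge0⟩
  have hub : upperDensity S ≤ 1 :=
    limsup_le_of_le hbddge.isCoboundedUnder_le (Filter.Eventually.of_forall hle)
  have hlb : ∀ ε : ℝ, 0 < ε → (1 - ε) ≤ upperDensity S := by
    intro ε hε
    apply le_limsup_of_frequently_le _ hbddle
    rw [frequently_atTop]
    intro a
    obtain ⟨l, hNl, hl1, hsub⟩ := h (max (a + 1) (Nat.ceil (2 / ε)))
    have hl1' : 1 ≤ l := hl1
    have hla : a + 1 ≤ l := le_trans (le_max_left _ _) hNl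
    have hlε : 2 / ε ≤ (l : ℝ) := le_trans (Nat.le_ceil _) (by exact_mod_cast le_trans (le_max_right _ _) hNl)
    refine ⟨(l + 1).factorial - 1, ?_, ?_⟩
    · have : l + 1 ≤ (l + 1).factorial := Nat.self_le_factorial _
      omega
    · set b := (l + 1).factorial - 1 with hb
      have hfact : l.factorial < (l + 1).factorial := (Nat.factorial_lt hl1).mpr (Nat.lt_succ_self l)
      have hbpos : 1 ≤ b := by
        have h2 : 2 ≤ (l + 1).factorial := by
          have : l + 1 ≤ (l + 1).factorial := Nat.self_le_factorial _
          omega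
        omega
      -- count lower bound
      have hsub2 : Set.Icc l.factorial b ⊆ S ∩ Set.Icc 1 b := by
        intro i hi
        rcases hi with ⟨hi1, hi2⟩
        refine ⟨hsub ⟨hi1, by omega⟩, ⟨le_trans (Nat.one_le_iff_ne_zero.mpr (Nat.factorial_ne_zero l)) hi1, hi2⟩⟩
      have hcount : (l + 1).factorial - l.factorial ≤ Nat.card ↥(S ∩ Set.Icc 1 b) := by
        have e1 := Set.ncard_le_ncard hsub2 ((Set.finite_Icc 1 b).subset Set.inter_subset_right)
        have e2 : (Set.Icc l.factorial b).ncard = b + 1 - l.factorial := by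
          rw [Set.ncard_eq_toFinset_card']; simp [Nat.card_Icc]
        have e3 : Nat.card ↥(S ∩ Set.Icc 1 b) = (S ∩ Set.Icc 1 b).ncard :=
          Nat.card_coe_set_eq _
        have e4 : b = (l + 1).factorial - 1 := hb
        omega
      -- real arithmetic
      set A := ((l + 1).factorial : ℝ) with hA
      set B := ((l.factorial : ℕ) : ℝ) with hB
      have hAB : A = (l + 1) * B := by
        rw [hA, hB, Nat.factorial_succ]; push_cast; ring
      have hB1 : (1:ℝ) ≤ B := by
        rw [hB]; exact_mod_cast Nat.one_le_iff_ne_zero.mpr (Nat.factorial_ne_zero l)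
      have hA2 : (2:ℝ) ≤ A := by
        rw [hA]
        have h1 : l + 1 ≤ (l + 1).factorial := Nat.self_le_factorial _
        have h2 : (2:ℕ) ≤ (l + 1).factorial := by omega
        exact_mod_cast h2
      have hbR : (b : ℝ) = A - 1 := by
        rw [hb, hA]
        have h2 : 1 ≤ (l + 1).factorial := Nat.one_le_iff_ne_zero.mpr (Nat.factorial_ne_zero _)
        push_cast [Nat.cast_sub h2]
        ring
      have hεl : 2 ≤ ε * (l + 1) := by
        have h2 : 2 ≤ ε * l := by
          rw [div_le_iff₀ hε] at hlε
          linarith [hlε]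
        nlinarith
      have hkey : (1 - ε) * (A - 1) ≤ A - B := by
        nlinarith [hB1, hA2, hεl, hε.le]
      have hcR : (A - B : ℝ) ≤ (Nat.card ↥(S ∩ Set.Icc 1 b) : ℝ) := by
        have := hcount
        have hABn : ((((l+1).factorial - l.factorial : ℕ)) : ℝ) = A - B := by
          rw [hA, hB]
          push_cast [Nat.cast_sub hfact.le]
          ring
        calc (A - B : ℝ) = (((l+1).factorial - l.factorial : ℕ) : ℝ) := hABn.symm
          _ ≤ _ := by exact_mod_cast hcount
      have hbpos' : (0:ℝ) < b := by exact_mod_cast hbpos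
      rw [hf]
      rw [le_div_iff₀ hbpos']
      calc (1 - ε) * (b:ℝ) = (1 - ε) * (A - 1) := by rw [hbR]
        _ ≤ A - B := hkey
        _ ≤ _ := hcR
  have : ∀ ε : ℝ, 0 < ε → 1 ≤ upperDensity S + ε := fun ε hε => by linarith [hlb ε hε]
  have h1 : (1:ℝ) ≤ upperDensity S := le_of_forall_pos_le_add this
  exact le_antisymm hub h1

section Recs
variable (q : ℕ → ℚ)

def recs (r : ℝ) : Set ℕ :=
  {l | r < (q l : ℝ) ∧ ∀ m < l, r < (q m : ℝ) → (q l : ℝ) < (q m : ℝ)}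

variable {q}

lemma q_mem (hq' : Set.range q = {p : ℚ | 0 ≤ p ∧ p ≤ 1}) (l : ℕ) :
    (0:ℚ) ≤ q l ∧ q l ≤ 1 := by
  have : q l ∈ Set.range q := Set.mem_range_self l
  rw [hq'] at this
  exact this

lemma idx_of (hq' : Set.range q = {p : ℚ | 0 ≤ p ∧ p ≤ 1}) {t : ℚ}
    (h0 : 0 ≤ t) (h1 : t ≤ 1) : ∃ l, q l = t := by
  have : t ∈ Set.range q := by rw [hq']; exact ⟨h0, h1⟩
  exact this

lemma exists_idx_btwn (hq' : Set.range q = {p : ℚ | 0 ≤ p ∧ p ≤ 1}) {r s : ℝ}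
    (h0 : 0 ≤ r) (hrs : r < s) (hs : s ≤ 1) :
    ∃ l, r < (q l : ℝ) ∧ (q l : ℝ) < s := by
  obtain ⟨t, ht1, ht2⟩ := exists_rat_btwn hrs
  have ht0 : (0:ℚ) ≤ t := by exact_mod_cast le_trans h0 ht1.le
  have ht1' : t ≤ 1 := by exact_mod_cast le_trans ht2.le hs
  obtain ⟨l, hl⟩ := idx_of hq' ht0 ht1'
  exact ⟨l, by rw [hl]; exact ⟨ht1, ht2⟩⟩

lemma recs_unbdd (hq : Function.Injective q)
    (hq' : Set.range q = {p : ℚ | 0 ≤ p ∧ p ≤ 1}) {r : ℝ} (h0 : 0 < r) (h1 : r < 1) :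
    ∀ L : ℕ, ∃ l ∈ recs q r, L < l := by
  classical
  intro L
  obtain ⟨mstar, hm1, hm2⟩ := exists_idx_btwn hq' h0.le h1 le_rfl
  set L' := max L mstar with hL'
  set V : Finset ℕ := (Finset.range (L' + 1)).filter (fun m => r < (q m : ℝ)) with hV
  have hmV : mstar ∈ V := by
    simp only [hV, Finset.mem_filter, Finset.mem_range]
    exact ⟨by omega, hm1⟩
  obtain ⟨mv, hmv, hmin⟩ := Finset.exists_min_image V (fun m => (q m : ℝ)) ⟨mstar, hmV⟩
  have hrv : r < (q mv : ℝ) := (Finset.mem_filter.mp hmv).2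
  have hv1 : (q mv : ℝ) ≤ 1 := by exact_mod_cast (q_mem hq' mv).2
  obtain ⟨t, ht1, ht2⟩ := exists_rat_btwn hrv
  have ht0 : (0:ℚ) ≤ t := by exact_mod_cast le_trans h0.le ht1.le
  have htle1 : t ≤ 1 := by exact_mod_cast le_trans ht2.le hv1
  obtain ⟨l0, hl0⟩ := idx_of hq' ht0 htle1
  set W : Finset ℕ :=
    (Finset.range (l0 + 1)).filter (fun m => r < (q m : ℝ) ∧ (q m : ℝ) ≤ t) with hW
  have hl0W : l0 ∈ W := by
    simp only [hW, Finset.mem_filter, Finset.mem_range, hl0]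
    exact ⟨by omega, ht1, le_rfl⟩
  obtain ⟨l, hlW, hlmin⟩ := Finset.exists_min_image W (fun m => (q m : ℝ)) ⟨l0, hl0W⟩
  have hl_props := Finset.mem_filter.mp hlW
  have hlr : r < (q l : ℝ) := hl_props.2.1
  have hlt : (q l : ℝ) ≤ t := hl_props.2.2
  have hlle : l ≤ l0 := by
    have := hl_props.1; simp only [Finset.mem_range] at this; omega
  have hLl : L' < l := by
    by_contra hcon
    push_neg at hcon
    have hlV : l ∈ V := by
      simp only [hV, Finset.mem_filter, Finset.mem_range]
      exact ⟨by omega, hlr⟩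
    have h5 := hmin l hlV
    have : (q mv : ℝ) ≤ t := le_trans h5 hlt
    linarith
  refine ⟨l, ⟨hlr, ?_⟩, by omega⟩
  intro m hm hrm
  by_cases hcase : (q m : ℝ) ≤ t
  · have hmW : m ∈ W := by
      simp only [hW, Finset.mem_filter, Finset.mem_range]
      exact ⟨by omega, hrm, hcase⟩
    have hle := hlmin m hmW
    have hne : (q l : ℝ) ≠ (q m : ℝ) := by
      intro hcontra
      exact absurd (hq (by exact_mod_cast hcontra)) (by omega)
    exact lt_of_le_of_ne hle hne
  · push_neg at hcase
    exact lt_of_le_of_lt hlt hcase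

lemma recs_ge_bounded {r s : ℝ} {m0 : ℕ} (hm0 : r < (q m0 : ℝ) ∧ (q m0 : ℝ) < s) :
    ∀ l ∈ recs q r, s ≤ (q l : ℝ) → l ≤ m0 := by
  intro l hl hs
  by_contra hcon
  push_neg at hcon
  have := hl.2 m0 hcon hm0.1
  linarith [hm0.2]

lemma no_strictAnti_nat (g : ℕ → ℕ) : ¬ StrictAnti g := by
  intro h
  have key : ∀ k, g k + k ≤ g 0 := by
    intro k
    induction k with
    | zero => simp
    | succ n ih =>
      have h2 : g (n + 1) < g n := h (by omega : n < n + 1)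
      show g (n + 1) + (n + 1) ≤ g 0
      omega
  have := key (g 0 + 1)
  omega

lemma nonrecs_infinite (hq : Function.Injective q)
    (hq' : Set.range q = {p : ℚ | 0 ≤ p ∧ p ≤ 1}) {r s : ℝ}
    (h0 : 0 < r) (hrs : r < s) (hs : s ≤ 1) :
    {m | r < (q m : ℝ) ∧ (q m : ℝ) < s ∧ m ∉ recs q r}.Infinite := by
  classical
  set T := {m | r < (q m : ℝ) ∧ (q m : ℝ) < s ∧ m ∉ recs q r} with hT
  apply Set.infinite_of_not_bddAbove
  rintro ⟨L, hL⟩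
  have hlen : (0:ℝ) < s - r := by linarith
  set u : ℕ → ℝ := fun k => r + (s - r) * (((k:ℝ) + 1) / ((k:ℝ) + 2)) with hudef
  have hfracpos : ∀ k : ℕ, (0:ℝ) < ((k:ℝ) + 1) / ((k:ℝ) + 2) := by
    intro k; positivity
  have hfraclt1 : ∀ k : ℕ, ((k:ℝ) + 1) / ((k:ℝ) + 2) < 1 := by
    intro k; rw [div_lt_one (by positivity)]; linarith
  have hu : ∀ k : ℕ, u k < u (k + 1) := by
    intro k
    have hfrac : ((k:ℝ) + 1) / ((k:ℝ) + 2) < (((k+1:ℕ):ℝ) + 1) / (((k+1:ℕ):ℝ) + 2) := by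
      push_cast
      rw [div_lt_div_iff₀ (by positivity) (by positivity)]
      nlinarith [Nat.cast_nonneg (α := ℝ) k]
    have := mul_lt_mul_of_pos_left hfrac hlen
    simp only [hudef]
    linarith
  have hulo : ∀ k : ℕ, r < u k := by
    intro k
    have := mul_pos hlen (hfracpos k)
    simp only [hudef]
    linarith
  have huhi : ∀ k : ℕ, u k < s := by
    intro k
    have := mul_lt_mul_of_pos_left (hfraclt1 k) hlen
    simp only [hudef]
    linarith
  have hsel : ∀ k : ℕ, ∃ tk : ℚ, u k < (tk:ℝ) ∧ (tk:ℝ) < u (k + 1) :=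
    fun k => exists_rat_btwn (hu k)
  choose t ht1 ht2 using hsel
  have htlo : ∀ k, r < (t k : ℝ) := fun k => lt_trans (hulo k) (ht1 k)
  have hthi : ∀ k, (t k : ℝ) < s := fun k => lt_trans (ht2 k) (huhi (k + 1))
  have hkey : ∀ k, (t k : ℝ) < (t (k + 1) : ℝ) := fun k => lt_trans (ht2 k) (ht1 (k + 1))
  have htmono : StrictMono fun k => (t k : ℝ) := strictMono_nat_of_lt_succ hkey
  have htinj : Function.Injective t := fun a b hab =>
    htmono.injective (by rw [hab])
  have hidx : ∀ k : ℕ, ∃ l, q l = t k := by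
    intro k
    refine idx_of hq' ?_ ?_
    · exact_mod_cast le_trans h0.le (htlo k).le
    · exact_mod_cast le_trans (hthi k).le hs
  choose g hg using hidx
  have hginj : Function.Injective g := by
    intro a b hab
    have : t a = t b := by rw [← hg a, ← hg b, hab]
    exact htinj this
  have hfin : {k | g k ≤ L}.Finite := by
    have hsub : {k | g k ≤ L} ⊆ g ⁻¹' (Set.Iic L) := fun k hk => hk
    exact ((Set.finite_Iic L).preimage hginj.injOn).subset hsub
  obtain ⟨K, hK⟩ : ∃ K, ∀ k ∈ {k | g k ≤ L}, k < K := by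
    rcases hfin.bddAbove with ⟨K0, hK0⟩
    exact ⟨K0 + 1, fun k hk => by have := hK0 hk; omega⟩
  have hgL : ∀ k, L < g (K + k) := by
    intro k
    by_contra hcon
    push_neg at hcon
    have := hK (K + k) hcon
    omega
  have hrec : ∀ k, g (K + k) ∈ recs q r := by
    intro k
    by_contra hcon
    have hmem : g (K + k) ∈ T := by
      rw [hT]
      exact ⟨by rw [hg]; exact htlo _, by rw [hg]; exact hthi _, hcon⟩
    have := hL hmem
    have := hgL k
    omega
  have hanti : StrictAnti (fun k => g (K + k)) := by
    intro a b hab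
    simp only
    have hne : g (K + b) ≠ g (K + a) := fun h => by
      have := hginj h; omega
    rcases lt_or_gt_of_ne hne with h | h
    · exact h
    · exfalso
      have hrecb := hrec b
      have h4 := hrecb.2 (g (K + a)) h (by rw [hg]; exact htlo _)
      rw [hg, hg] at h4
      have h5 := htmono (show K + a < K + b by omega)
      simp only at h5
      linarith
  exact no_strictAnti_nat _ hanti

end Recs
lemma fin2_le_one (a : Fin 2) : a ≤ 1 := by omega
lemma fin2_zero_le (a : Fin 2) : 0 ≤ a := by omega
lemma fin2_zero_lt_one : (0 : Fin 2) < 1 := by omega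

section Swap
variable {R : (ℕ → Fin 2) → (ℕ → Fin 2) → Prop}
variable (htotal : ∀ x y, R x y ∨ R y x)
variable (htrans : ∀ x y z, R x y → R y z → R x z)
variable (hAN : ∀ (x : ℕ → Fin 2) (i j : ℕ),
      R x (x ∘ Equiv.swap i j) ∧ R (x ∘ Equiv.swap i j) x)

lemma swapdom (htotal : ∀ x y, R x y ∨ R y x)
    (htrans : ∀ x y z, R x y → R y z → R x z)
    (hAN : ∀ (x : ℕ → Fin 2) (i j : ℕ),
      R x (x ∘ Equiv.swap i j) ∧ R (x ∘ Equiv.swap i j) x)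
    (u : ℕ → Fin 2) (B : Finset ℕ) :
    ∀ (G : Finset ℕ) (v : ℕ → Fin 2), Disjoint B G →
      (∀ i, i ∉ B → v i ≤ u i) → (∀ i ∈ G, v i = 0 ∧ u i = 1) → B.card ≤ G.card →
      ∃ v', (R v v' ∧ R v' v) ∧ (∀ i, v' i ≤ u i) ∧ ∀ i, i ∉ B → i ∉ G → v' i = v i := by
  classical
  induction B using Finset.induction_on with
  | empty =>
    intro G v _ hB _ _
    exact ⟨v, ⟨(htotal v v).elim id id, (htotal v v).elim id id⟩,
      fun i => hB i (Finset.notMem_empty i), fun i _ _ => rfl⟩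
  | insert a B ha ih =>
    intro G v hd hB hG hc
    have hcard : B.card + 1 ≤ G.card := by
      rw [← Finset.card_insert_of_notMem ha]; exact hc
    have hGne : G.Nonempty := Finset.card_pos.mp (by omega)
    obtain ⟨g, hgG⟩ := hGne
    have hag : a ≠ g := by
      intro h
      exact (Finset.disjoint_left.mp hd (Finset.mem_insert_self a B)) (h ▸ hgG)
    have hgB : g ∉ insert a B := fun h => (Finset.disjoint_left.mp hd h) hgG
    set v1 : ℕ → Fin 2 := v ∘ Equiv.swap a g with hv1
    have hequiv := hAN v a g
    have hv1a : v1 a = v g := by simp [hv1, Equiv.swap_apply_left]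
    have hv1g : v1 g = v a := by simp [hv1, Equiv.swap_apply_right]
    have hv1other : ∀ i, i ≠ a → i ≠ g → v1 i = v i := by
      intro i h1 h2
      simp [hv1, Equiv.swap_apply_of_ne_of_ne h1 h2]
    have hd' : Disjoint B (G.erase g) :=
      Finset.disjoint_of_subset_left (Finset.subset_insert a B)
        (Finset.disjoint_of_subset_right (Finset.erase_subset g G) hd)
    have hB' : ∀ i, i ∉ B → v1 i ≤ u i := by
      intro i hi
      by_cases h1 : i = a
      · rw [h1, hv1a, (hG g hgG).1]
        exact fin2_zero_le _
      · by_cases h2 : i = g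
        · rw [h2, hv1g, (hG g hgG).2]
          exact fin2_le_one _
        · rw [hv1other i h1 h2]
          exact hB i (by simp [Finset.mem_insert, h1, hi])
    have hG' : ∀ i ∈ G.erase g, v1 i = 0 ∧ u i = 1 := by
      intro i hi
      have h2 : i ≠ g := Finset.ne_of_mem_erase hi
      have hiG : i ∈ G := Finset.mem_of_mem_erase hi
      have h1 : i ≠ a := by
        intro h
        exact (Finset.disjoint_left.mp hd (Finset.mem_insert_self a B)) (h ▸ hiG)
      rw [hv1other i h1 h2]
      exact hG i hiG
    have hc' : B.card ≤ (G.erase g).card := by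
      rw [Finset.card_erase_of_mem hgG]
      omega
    obtain ⟨v', ⟨h1, h2⟩, h3, h4⟩ := ih (G.erase g) v1 hd' hB' hG' hc'
    refine ⟨v', ⟨htrans _ _ _ hequiv.1 h1, htrans _ _ _ h2 hequiv.2⟩, h3, ?_⟩
    intro i hi1 hi2
    have hiB : i ∉ B := fun h => hi1 (Finset.mem_insert_of_mem h)
    have hie : i ∉ G.erase g := fun h => hi2 (Finset.mem_of_mem_erase h)
    rw [h4 i hiB hie]
    exact hv1other i (fun h => hi1 (h ▸ Finset.mem_insert_self a B)) (fun h => hi2 (h ▸ hgG))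

lemma strict_master (htotal : ∀ x y, R x y ∨ R y x)
    (htrans : ∀ x y z, R x y → R y z → R x z)
    (hWUAP : ∀ x y : ℕ → Fin 2, (∀ i, y i ≤ x i) →
      ∀ S : Set ℕ, upperDensity S = 1 → (∀ i ∈ S, y i < x i) → (R x y ∧ ¬ R y x))
    (hAN : ∀ (x : ℕ → Fin 2) (i j : ℕ),
      R x (x ∘ Equiv.swap i j) ∧ R (x ∘ Equiv.swap i j) x)
    (u v : ℕ → Fin 2) (S : Set ℕ) (B G : Finset ℕ)
    (hS : upperDensity S = 1)
    (hSuv : ∀ i ∈ S, v i = 0 ∧ u i = 1)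
    (hSB : ∀ i ∈ S, i ∉ B ∧ i ∉ G)
    (hd : Disjoint B G)
    (hB : ∀ i, i ∉ B → v i ≤ u i)
    (hG : ∀ i ∈ G, v i = 0 ∧ u i = 1)
    (hc : B.card ≤ G.card) : R u v ∧ ¬ R v u := by
  obtain ⟨v', ⟨h1, h2⟩, h3, h4⟩ := swapdom htotal htrans hAN u B G v hd hB hG hc
  have hstrict : ∀ i ∈ S, v' i < u i := by
    intro i hi
    rw [h4 i (hSB i hi).1 (hSB i hi).2, (hSuv i hi).1, (hSuv i hi).2]
    exact fin2_zero_lt_one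
  have hmain := hWUAP u v' h3 S hS hstrict
  constructor
  · exact htrans _ _ _ hmain.1 h2
  · intro hcon
    exact hmain.2 (htrans _ _ _ h2 hcon)

end Swap
section Streams
open scoped Classical

noncomputable def xs (q : ℕ → ℚ) (r : ℝ) (i : ℕ) : Fin 2 :=
  if 0 < (q (blk i) : ℝ) ∧ (q (blk i) : ℝ) < r then 1 else 0

noncomputable def zs (q : ℕ → ℚ) (r : ℝ) (i : ℕ) : Fin 2 :=
  if (0 < (q (blk i) : ℝ) ∧ (q (blk i) : ℝ) < r) ∨ blk i ∈ recs q r then 1 else 0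

end Streams

/-- given a complete transitive relation R on {0,1}^ℕ satisfying
Weak Upper Asymptotic Pareto and Anonymity, and a fixed enumeration of the
rationals of [0,1], there are families r ↦ x(r), r ↦ z(r) of streams such that
for all r < s in (0,1) one has the strict chain
x(r) ≺ z(r) ≺ x(s) ≺ z(s); consequently, for any W representing R the open
intervals (W(x(r)), W(z(r))), r ∈ (0,1), are nonempty and pairwise disjoint. -/
theorem stmt_10 (R : (ℕ → Fin 2) → (ℕ → Fin 2) → Prop)
    (htotal : ∀ x y, R x y ∨ R y x)
    (htrans : ∀ x y z, R x y → R y z → R x z)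
    (hWUAP : ∀ x y : ℕ → Fin 2, (∀ i, y i ≤ x i) →
      ∀ S : Set ℕ, upperDensity S = 1 → (∀ i ∈ S, y i < x i) → (R x y ∧ ¬ R y x))
    (hAN : ∀ (x : ℕ → Fin 2) (i j : ℕ),
      R x (x ∘ Equiv.swap i j) ∧ R (x ∘ Equiv.swap i j) x)
    (q : ℕ → ℚ) (hq : Function.Injective q)
    (hq' : Set.range q = {p : ℚ | 0 ≤ p ∧ p ≤ 1}) :
    ∃ x z : ℝ → (ℕ → Fin 2),
      (∀ r ∈ Set.Ioo (0 : ℝ) 1, R (z r) (x r) ∧ ¬ R (x r) (z r)) ∧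
      (∀ r ∈ Set.Ioo (0 : ℝ) 1, ∀ s ∈ Set.Ioo (0 : ℝ) 1, r < s →
        R (x s) (z r) ∧ ¬ R (z r) (x s)) ∧
      (∀ W : (ℕ → Fin 2) → ℝ, (∀ u v, R u v ↔ W v ≤ W u) →
        (∀ r ∈ Set.Ioo (0 : ℝ) 1, W (x r) < W (z r)) ∧
        (∀ r ∈ Set.Ioo (0 : ℝ) 1, ∀ s ∈ Set.Ioo (0 : ℝ) 1, r ≠ s →
          Disjoint (Set.Ioo (W (x r)) (W (z r))) (Set.Ioo (W (x s)) (W (z s))))) := by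
  classical
  have claimA : ∀ r ∈ Set.Ioo (0 : ℝ) 1, R (zs q r) (xs q r) ∧ ¬ R (xs q r) (zs q r) := by
    rintro r ⟨hr0, hr1⟩
    apply strict_master htotal htrans hWUAP hAN (zs q r) (xs q r)
      {i | 1 ≤ i ∧ blk i ∈ recs q r} ∅ ∅
    · -- density
      apply upperDensity_eq_one
      intro N0
      obtain ⟨l, hlrec, hlgt⟩ := recs_unbdd hq hq' hr0 hr1 (max N0 1)
      have hl1 : 1 ≤ l := by omega
      refine ⟨l, by omega, hl1, ?_⟩
      rintro i ⟨hi1, hi2⟩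
      have hblk : blk i = l := blk_eq hl1 hi1 hi2
      have hfact1 : 1 ≤ l.factorial := Nat.one_le_iff_ne_zero.mpr (Nat.factorial_ne_zero l)
      exact ⟨by omega, hblk ▸ hlrec⟩
    · -- hSuv
      rintro i ⟨hi1, hirec⟩
      have hqr : r < (q (blk i) : ℝ) := hirec.1
      constructor
      · show xs q r i = 0
        rw [xs, if_neg]
        rintro ⟨_, h2⟩
        linarith
      · show zs q r i = 1
        rw [zs, if_pos (Or.inr hirec)]
    · rintro i _
      exact ⟨Finset.notMem_empty i, Finset.notMem_empty i⟩
    · exact Finset.disjoint_empty_left _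
    · intro i _
      by_cases h : 0 < (q (blk i) : ℝ) ∧ (q (blk i) : ℝ) < r
      · rw [show zs q r i = 1 from by rw [zs, if_pos (Or.inl h)]]
        exact fin2_le_one _
      · rw [show xs q r i = 0 from by rw [xs, if_neg h]]
        exact fin2_zero_le _
    · intro i hi
      exact absurd hi (Finset.notMem_empty i)
    · simp
  have claimB : ∀ r ∈ Set.Ioo (0 : ℝ) 1, ∀ s ∈ Set.Ioo (0 : ℝ) 1, r < s →
      R (xs q s) (zs q r) ∧ ¬ R (zs q r) (xs q s) := by
    rintro r ⟨hr0, hr1⟩ s ⟨hs0, hs1⟩ hrs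
    obtain ⟨m0, hm0⟩ := exists_idx_btwn hq' hr0.le hrs hs1.le
    set B : Finset ℕ := (Finset.range ((m0 + 1).factorial)).filter
      (fun i => blk i ∈ recs q r ∧ s ≤ (q (blk i) : ℝ)) with hBdef
    set MN : Set ℕ := {m | r < (q m : ℝ) ∧ (q m : ℝ) < s ∧ m ∉ recs q r} with hMNdef
    have hMN : MN.Infinite := nonrecs_infinite hq hq' hr0 hrs hs1.le
    have hMN0 : (MN \ {0}).Infinite := hMN.diff (Set.finite_singleton 0)
    obtain ⟨K, hKsub, hKcard⟩ := hMN0.exists_subset_card_eq B.card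
    have hK1 : ∀ l ∈ K, 1 ≤ l := by
      intro l hl
      have := hKsub hl
      have : l ≠ 0 := this.2
      omega
    have hKMN : ∀ l ∈ K, l ∈ MN := fun l hl => (hKsub hl).1
    set G : Finset ℕ := Finset.image (fun l : ℕ => l.factorial) K with hGdef
    have hInj : Set.InjOn (fun l : ℕ => l.factorial) ↑K := by
      intro a ha b hb hab
      simp only at hab
      rcases lt_trichotomy a b with h | h | h
      · exact absurd hab (Nat.ne_of_lt ((Nat.factorial_lt (hK1 a ha)).mpr h))
      · exact h
      · exact absurd hab.symm (Nat.ne_of_lt ((Nat.factorial_lt (hK1 b hb)).mpr h))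
    have hGcard : G.card = B.card := by
      rw [hGdef, Finset.card_image_of_injOn hInj, hKcard]
    have hGmem : ∀ i ∈ G, ∃ l ∈ K, i = l.factorial ∧ blk i = l := by
      intro i hi
      rw [hGdef, Finset.mem_image] at hi
      obtain ⟨l, hl, hli⟩ := hi
      exact ⟨l, hl, hli.symm, by rw [← hli]; exact blk_fact (hK1 l hl)⟩
    apply strict_master htotal htrans hWUAP hAN (xs q s) (zs q r)
      {i | 1 ≤ i ∧ blk i ∈ MN ∧ blk i ∉ K} B G
    · -- density
      apply upperDensity_eq_one
      intro N0
      have hinf2 : (MN \ (↑K ∪ {0})).Infinite :=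
        hMN.diff ((K.finite_toSet).union (Set.finite_singleton 0))
      obtain ⟨l, hl, hlgt⟩ := hinf2.exists_gt N0
      have hl0 : l ≠ 0 := fun h => hl.2 (Or.inr (by simp [h]))
      have hlK : l ∉ K := fun h => hl.2 (Or.inl h)
      refine ⟨l, by omega, by omega, ?_⟩
      rintro i ⟨hi1, hi2⟩
      have hblk : blk i = l := blk_eq (by omega) hi1 hi2
      have hfact1 : 1 ≤ l.factorial := Nat.one_le_iff_ne_zero.mpr (Nat.factorial_ne_zero l)
      exact ⟨by omega, hblk ▸ hl.1, hblk ▸ hlK⟩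
    · -- hSuv
      rintro i ⟨hi1, hiMN, hiK⟩
      have h1 : r < (q (blk i) : ℝ) := hiMN.1
      have h2 : (q (blk i) : ℝ) < s := hiMN.2.1
      have h3 : blk i ∉ recs q r := hiMN.2.2
      constructor
      · show zs q r i = 0
        rw [zs, if_neg]
        rintro (⟨_, hlt⟩ | hrec)
        · linarith
        · exact h3 hrec
      · show xs q s i = 1
        rw [xs, if_pos ⟨by linarith, h2⟩]
    · -- hSB
      rintro i ⟨hi1, hiMN, hiK⟩
      constructor
      · intro hiB
        rw [hBdef, Finset.mem_filter] at hiB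
        exact hiMN.2.2 hiB.2.1
      · intro hiG
        obtain ⟨l, hlK, _, hblk⟩ := hGmem i hiG
        exact hiK (hblk ▸ hlK)
    · -- disjoint
      rw [Finset.disjoint_left]
      intro i hiB hiG
      rw [hBdef, Finset.mem_filter] at hiB
      obtain ⟨l, hlK, _, hblk⟩ := hGmem i hiG
      have := hKMN l hlK
      exact this.2.2 (hblk ▸ hiB.2.1)
    · -- hB
      intro i hiB
      by_cases hz : (0 < (q (blk i) : ℝ) ∧ (q (blk i) : ℝ) < r) ∨ blk i ∈ recs q r
      · rcases hz with h | h
        · rw [show xs q s i = 1 from by rw [xs, if_pos ⟨h.1, by linarith [h.2]⟩]]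
          exact fin2_le_one _
        · by_cases hqs : (q (blk i) : ℝ) < s
          · rw [show xs q s i = 1 from by rw [xs, if_pos ⟨by linarith [h.1], hqs⟩]]
            exact fin2_le_one _
          · push_neg at hqs
            exfalso
            apply hiB
            have hle : blk i ≤ m0 := recs_ge_bounded hm0 (blk i) h hqs
            have hibound : i < (m0 + 1).factorial := blk_mem_bound hle
            rw [hBdef, Finset.mem_filter, Finset.mem_range]
            exact ⟨hibound, h, hqs⟩
      · rw [show zs q r i = 0 from by rw [zs, if_neg hz]]
        exact fin2_zero_le _
    · -- hG
      intro i hiG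
      obtain ⟨l, hlK, _, hblk⟩ := hGmem i hiG
      have hlMN := hKMN l hlK
      have h1 : r < (q (blk i) : ℝ) := hblk ▸ hlMN.1
      have h2 : (q (blk i) : ℝ) < s := hblk ▸ hlMN.2.1
      have h3 : blk i ∉ recs q r := hblk ▸ hlMN.2.2
      constructor
      · show zs q r i = 0
        rw [zs, if_neg]
        rintro (⟨_, hlt⟩ | hrec)
        · linarith
        · exact h3 hrec
      · show xs q s i = 1
        rw [xs, if_pos ⟨by linarith, h2⟩]
    · omega
  refine ⟨xs q, zs q, claimA, claimB, ?_⟩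
  intro W hW
  have hlt : ∀ r ∈ Set.Ioo (0 : ℝ) 1, W (xs q r) < W (zs q r) := by
    intro r hr
    obtain ⟨h1, h2⟩ := claimA r hr
    have hle : W (xs q r) ≤ W (zs q r) := (hW _ _).mp h1
    have hne : ¬ W (zs q r) ≤ W (xs q r) := fun h => h2 ((hW _ _).mpr h)
    exact lt_of_le_not_ge hle hne
  refine ⟨hlt, ?_⟩
  intro r hr s hs hne
  have key : ∀ r' ∈ Set.Ioo (0 : ℝ) 1, ∀ s' ∈ Set.Ioo (0 : ℝ) 1, r' < s' →
      Disjoint (Set.Ioo (W (xs q r')) (W (zs q r'))) (Set.Ioo (W (xs q s')) (W (zs q s'))) := by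
    intro r' hr' s' hs' hlt'
    have hchain : W (zs q r') ≤ W (xs q s') := (hW _ _).mp (claimB r' hr' s' hs' hlt').1
    rw [Set.disjoint_left]
    rintro t ⟨_, ht2⟩ ⟨ht3, _⟩
    linarith
  rcases hne.lt_or_gt with h | h
  · exact key r hr s hs h
  · exact (key s hs r hr h).symm
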